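/- Let ψ be as in the context. There exist constants c₂, c₃ ∈ (0,∞) and L₀, R₀ > 1 (all independent of ν, L and R) such that for all L ≥ L₀, all R ≥ R₀ and every Borel measure ν on ℝ^d with ν(Λ_j) ≤ 1 for all j ∈ ℤ^d the following holds: setting Λ := ⋃_{j₁∈ℤ^{d₁}, |j₁| < L} Λ_{(j₁,0)}, Λ̃ := ⋃_{j=(j₁,j₂)∈ℤ^d, |j₁| ≤ L/8, R+1 < |j₂| ≤ 2R} Λ_j, and V_{ν,R}(x) := ∫_{{y : |y₂| > R}} f(x − y) ν(dy), one has ∫_Λ V_{ν,R}(x) ψ(x)² dx ≥ c₂ · R^{−α₂(1−γ₁)} · ν(Λ̃) − c₃ · |Λ| · L^{−α₁(1−γ)}. -/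

import Mathlib

open MeasureTheory ENNReal

noncomputable section

/-- The half-open unit cube `Λ_j = j + [-1/2, 1/2)^d` centred at the lattice point `j`. -/
def cube (d : ℕ) (j : Fin d → ℤ) : Set (Fin d → ℝ) :=
  {x | ∀ i, (j i : ℝ) - 1/2 ≤ x i ∧ x i < (j i : ℝ) + 1/2}

/-- The unit cube in the product space `ℝ^{d₁} × ℝ^{d₂}` centred at the lattice point `j`. -/
def cubeP (d₁ d₂ : ℕ) (j : (Fin d₁ → ℤ) × (Fin d₂ → ℤ)) :
    Set ((Fin d₁ → ℝ) × (Fin d₂ → ℝ)) :=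
  (cube d₁ j.1) ×ˢ (cube d₂ j.2)

/-- The lattice point `j ∈ ℤ^{d₁} × ℤ^{d₂}` viewed as a vector of `ℝ^{d₁} × ℝ^{d₂}`. -/
def latVecP (d₁ d₂ : ℕ) (j : (Fin d₁ → ℤ) × (Fin d₂ → ℤ)) :
    (Fin d₁ → ℝ) × (Fin d₂ → ℝ) :=
  (fun i => (j.1 i : ℝ), fun i => (j.2 i : ℝ))

lemma cube_eq (d : ℕ) (j : Fin d → ℤ) :
    cube d j = Set.pi Set.univ (fun i => Set.Ico ((j i : ℝ) - 1/2) ((j i : ℝ) + 1/2)) := by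
  ext x; simp [cube, Set.mem_pi, Set.mem_Ico]

lemma measurableSet_cube (d : ℕ) (j : Fin d → ℤ) : MeasurableSet (cube d j) := by
  rw [cube_eq]; exact MeasurableSet.univ_pi fun i => measurableSet_Ico

lemma volume_cube (d : ℕ) (j : Fin d → ℤ) : volume (cube d j) = 1 := by
  rw [cube_eq, volume_pi_pi]
  have : ∀ i : Fin d, volume (Set.Ico ((j i : ℝ) - 1/2) ((j i : ℝ) + 1/2)) = 1 := by
    intro i; rw [Real.volume_Ico]; norm_num
  rw [Finset.prod_congr rfl fun i _ => this i, Finset.prod_const, one_pow]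

lemma measurableSet_cubeP (d₁ d₂ : ℕ) (j : (Fin d₁ → ℤ) × (Fin d₂ → ℤ)) :
    MeasurableSet (cubeP d₁ d₂ j) :=
  (measurableSet_cube d₁ j.1).prod (measurableSet_cube d₂ j.2)

lemma volume_cubeP (d₁ d₂ : ℕ) (j : (Fin d₁ → ℤ) × (Fin d₂ → ℤ)) :
    volume (cubeP d₁ d₂ j) = 1 := by
  rw [cubeP, show (volume : Measure ((Fin d₁ → ℝ) × (Fin d₂ → ℝ))) = (volume : Measure (Fin d₁ → ℝ)).prod volume from rfl, Measure.prod_prod, volume_cube, volume_cube, mul_one]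

lemma eq_floor_of_mem_cube {d : ℕ} {j : Fin d → ℤ} {x : Fin d → ℝ} (hx : x ∈ cube d j)
    (i : Fin d) : j i = ⌊x i + 1/2⌋ := by
  obtain ⟨h1, h2⟩ := hx i
  symm
  rw [Int.floor_eq_iff]
  constructor <;> push_cast <;> linarith

lemma cube_disjoint {d : ℕ} {j j' : Fin d → ℤ} (h : j ≠ j') :
    Disjoint (cube d j) (cube d j') := by
  rw [Set.disjoint_left]
  intro x hx hx'
  exact h (funext fun i => (eq_floor_of_mem_cube hx i).trans (eq_floor_of_mem_cube hx' i).symm)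

lemma cubeP_disjoint {d₁ d₂ : ℕ} {j j' : (Fin d₁ → ℤ) × (Fin d₂ → ℤ)} (h : j ≠ j') :
    Disjoint (cubeP d₁ d₂ j) (cubeP d₁ d₂ j') := by
  rcases Prod.mk.injEq j.1 j.2 j'.1 j'.2 ▸ (fun hh => h hh) with _
  by_cases h1 : j.1 = j'.1
  · have h2 : j.2 ≠ j'.2 := fun h2 => h (Prod.ext h1 h2)
    exact Set.disjoint_of_subset (Set.prod_subset_preimage_snd _ _)
      (Set.prod_subset_preimage_snd _ _) ((cube_disjoint h2).preimage _)
  · exact Set.disjoint_of_subset (Set.prod_subset_preimage_fst _ _)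
      (Set.prod_subset_preimage_fst _ _) ((cube_disjoint h1).preimage _)

lemma mem_cube_sub {d : ℕ} (j : Fin d → ℤ) (x : Fin d → ℝ) :
    x ∈ cube d j ↔ (x - fun i => (j i : ℝ)) ∈ cube d 0 := by
  simp only [cube, Set.mem_setOf_eq, Pi.sub_apply, Pi.zero_apply, Int.cast_zero]
  constructor <;> intro h i <;> have := h i <;> constructor <;> linarith [this.1, this.2]

lemma cubeP_eq_preimage (d₁ d₂ : ℕ) (j : (Fin d₁ → ℤ) × (Fin d₂ → ℤ)) :
    cubeP d₁ d₂ j = (fun x => x - latVecP d₁ d₂ j) ⁻¹' (cubeP d₁ d₂ 0) := by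
  ext x
  simp only [cubeP, Set.mem_preimage, Set.mem_prod, latVecP, Prod.fst_sub, Prod.snd_sub]
  rw [mem_cube_sub j.1, mem_cube_sub j.2]
  rfl

lemma norm_intCast_pi {d : ℕ} (j : Fin d → ℤ) : ‖(fun i => (j i : ℝ))‖ = ‖j‖ := by
  rw [Pi.norm_def, Pi.norm_def]
  norm_cast

lemma norm_sub_cast_le_half {d : ℕ} {j : Fin d → ℤ} {x : Fin d → ℝ} (h : x ∈ cube d j) :
    ‖x - (fun i => (j i : ℝ))‖ ≤ 1/2 := by
  apply pi_norm_le_iff_of_nonneg (by norm_num) |>.2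
  intro i
  obtain ⟨h1, h2⟩ := h i
  rw [Pi.sub_apply, Real.norm_eq_abs, abs_le]
  constructor <;> linarith

lemma norm_pi_int_le {d : ℕ} {k : Fin d → ℤ} {r : ℝ} (hr : 0 ≤ r)
    (h : ∀ i, |(k i : ℝ)| ≤ r) : ‖k‖ ≤ r := by
  apply pi_norm_le_iff_of_nonneg hr |>.2
  intro i
  rw [Int.norm_eq_abs]
  exact_mod_cast h i

lemma abs_le_of_norm_pi_int {d : ℕ} {k : Fin d → ℤ} {r : ℝ} (h : ‖k‖ ≤ r) (i : Fin d) :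
    |(k i : ℝ)| ≤ r := by
  have := (norm_le_pi_norm k i).trans h
  rw [Int.norm_eq_abs] at this
  exact_mod_cast this

lemma card_Icc_pi (d : ℕ) (M : ℕ) :
    (Finset.Icc (fun _ : Fin d => -(M:ℤ)) (fun _ => (M:ℤ))).card = (2*M+1)^d := by
  rw [Pi.card_Icc]
  have : ∀ i : Fin d, (Finset.Icc (-(M:ℤ)) (M:ℤ)).card = 2*M+1 := by
    intro i; rw [Int.card_Icc]; omega
  rw [Finset.prod_congr rfl (fun i _ => this i), Finset.prod_const, Finset.card_univ,
    Fintype.card_fin]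

lemma lintegral_cubeP_translate (d₁ d₂ : ℕ) (j : (Fin d₁ → ℤ) × (Fin d₂ → ℤ))
    (g : (Fin d₁ → ℝ) × (Fin d₂ → ℝ) → ℝ≥0∞) :
    ∫⁻ x in cubeP d₁ d₂ j, g (x - latVecP d₁ d₂ j) = ∫⁻ z in cubeP d₁ d₂ 0, g z := by
  set v := latVecP d₁ d₂ j
  have hTeq : (fun x : (Fin d₁ → ℝ) × (Fin d₂ → ℝ) => x - v) = (fun x => x + (-v)) := by
    funext x; exact sub_eq_add_neg x v
  haveI : (volume : Measure ((Fin d₁ → ℝ) × (Fin d₂ → ℝ))).IsAddRightInvariant := by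
    rw [MeasureTheory.Measure.volume_eq_prod]; infer_instance
  have hmp : MeasurePreserving (fun x : (Fin d₁ → ℝ) × (Fin d₂ → ℝ) => x - v) volume volume := by
    rw [hTeq]; exact measurePreserving_add_right volume (-v)
  have hemb : MeasurableEmbedding (fun x : (Fin d₁ → ℝ) × (Fin d₂ → ℝ) => x - v) := by
    rw [hTeq]; exact measurableEmbedding_addRight (-v)
  have := hmp.setLIntegral_comp_preimage_emb hemb g (cubeP d₁ d₂ 0)
  rw [← cubeP_eq_preimage] at this
  exact this

set_option maxHeartbeats 1000000 in
/-- with `Λ` the row of cubes `Λ_{(j₁,0)}`, `|j₁| < L`, and `Λ̃` the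
union of cubes `Λ_j`, `|j₁| ≤ L/8`, `R+1 < |j₂| ≤ 2R`, and `V_{ν,R}(x)` the potential
cut off at distance `R` in the second direction, one has
`∫_Λ V_{ν,R} ψ² ≥ c₂ R^{-α₂(1-γ₁)} ν(Λ̃) - c₃ |Λ| L^{-α₁(1-γ)}`. -/
theorem statement9 (d₁ d₂ : ℕ) (hd₁ : 0 < d₁) (hd₂ : 0 < d₂)
    (f : (Fin d₁ → ℝ) × (Fin d₂ → ℝ) → ℝ)
    (hf_meas : Measurable f) (hf_nonneg : ∀ x, 0 ≤ f x)
    (α₁ α₂ : ℝ) (hα₁ : 0 < α₁) (hα₂ : 0 < α₂)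
    (hγ : (d₁ : ℝ) / α₁ + (d₂ : ℝ) / α₂ < 1)
    (f_u f₀ r₀ : ℝ) (hfu : 0 < f_u) (hf₀ : 0 < f₀) (hr₀ : 0 < r₀)
    (h_low : ∀ x : (Fin d₁ → ℝ) × (Fin d₂ → ℝ), r₀ ≤ max ‖x.1‖ ‖x.2‖ →
      ENNReal.ofReal (f_u / (‖x.1‖ ^ α₁ + ‖x.2‖ ^ α₂)) ≤
        ∫⁻ y in cubeP d₁ d₂ 0, ENNReal.ofReal (f (y - x)))
    (h_upp : ∀ x : (Fin d₁ → ℝ) × (Fin d₂ → ℝ), r₀ ≤ max ‖x.1‖ ‖x.2‖ →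
      f x ≤ f₀ / (‖x.1‖ ^ α₁ + ‖x.2‖ ^ α₂))
    (ψ : (Fin d₁ → ℝ) × (Fin d₂ → ℝ) → ℝ) (hψ_meas : Measurable ψ)
    (hψ_pos : ∀ x, 0 < ψ x)
    (hψ_per : ∀ x j, ψ (x + latVecP d₁ d₂ j) = ψ x)
    (s : ℝ) (hs : 0 < s) (hψ_inf : ∀ x ∈ cubeP d₁ d₂ 0, s ≤ ψ x ^ 2) :
    ∃ c₂ c₃ L₀ R₀ : ℝ, 0 < c₂ ∧ 0 < c₃ ∧ 1 < L₀ ∧ 1 < R₀ ∧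
      ∀ L R : ℝ, L₀ ≤ L → R₀ ≤ R →
      ∀ ν : Measure ((Fin d₁ → ℝ) × (Fin d₂ → ℝ)),
        (∀ j, ν (cubeP d₁ d₂ j) ≤ 1) →
        ENNReal.ofReal (c₂ * R ^ (-(α₂ * (1 - (d₁ : ℝ) / α₁)))) *
            ν (⋃ j ∈ {j : (Fin d₁ → ℤ) × (Fin d₂ → ℤ) |
                ‖j.1‖ ≤ L / 8 ∧ R + 1 < ‖j.2‖ ∧ ‖j.2‖ ≤ 2 * R}, cubeP d₁ d₂ j) -
          ENNReal.ofReal c₃ *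
            volume (⋃ j₁ ∈ {j₁ : Fin d₁ → ℤ | ‖j₁‖ < L}, cubeP d₁ d₂ (j₁, 0)) *
            ENNReal.ofReal
              (L ^ (-(α₁ * (1 - ((d₁ : ℝ) / α₁ + (d₂ : ℝ) / α₂))))) ≤
        ∫⁻ x in ⋃ j₁ ∈ {j₁ : Fin d₁ → ℤ | ‖j₁‖ < L}, cubeP d₁ d₂ (j₁, 0),
          (∫⁻ y in {y : (Fin d₁ → ℝ) × (Fin d₂ → ℝ) | R < ‖y.2‖},
              ENNReal.ofReal (f (x - y)) ∂ν) * ENNReal.ofReal (ψ x ^ 2) := by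
  have hα₁' : α₁ ≠ 0 := hα₁.ne'
  have hα₂' : α₂ ≠ 0 := hα₂.ne'
  have hγ₁pos : 0 < (d₁ : ℝ) / α₁ := div_pos (by exact_mod_cast hd₁) hα₁
  have hγ₂pos : 0 < (d₂ : ℝ) / α₂ := div_pos (by exact_mod_cast hd₂) hα₂
  have h1γ : 0 < 1 - ((d₁ : ℝ) / α₁ + (d₂ : ℝ) / α₂) := by linarith
  have h1γ₁ : 0 < 1 - (d₁ : ℝ) / α₁ := by linarith
  set C₁ : ℝ := 2 ^ α₁ + 3 ^ α₂ with hC₁def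
  have hC₁ : 0 < C₁ := by positivity
  set c₀ : ℝ := f_u / (2 ^ d₁ * C₁) with hc₀def
  have hc₀ : 0 < c₀ := by positivity
  set b : ℝ := α₁ * (1 - ((d₁ : ℝ) / α₁ + (d₂ : ℝ) / α₂)) with hbdef
  have hb : 0 < b := by positivity
  refine ⟨s * c₀, s * c₀ * (3 ^ d₁ * 5 ^ d₂ * 2 ^ d₁) * 2 ^ b, 2, max 2 r₀,
    by positivity, by positivity, one_lt_two, lt_max_of_lt_left one_lt_two, ?_⟩
  intro L R hL hR ν hν
  have hL2 : 2 ≤ L := hL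
  have hL1 : 1 ≤ L := by linarith
  have hL0 : 0 < L := by linarith
  have hR2 : 2 ≤ R := le_trans (le_max_left _ _) hR
  have hRr₀ : r₀ ≤ R := le_trans (le_max_right _ _) hR
  have hR1 : 1 ≤ R := by linarith
  have hR0 : 0 < R := by linarith
  -- pointwise lower bound for ψ²
  have hψs : ∀ x, s ≤ ψ x ^ 2 := by
    intro x
    set j : (Fin d₁ → ℤ) × (Fin d₂ → ℤ) :=
      (fun i => ⌊x.1 i + 1/2⌋, fun i => ⌊x.2 i + 1/2⌋) with hjdef
    have hmem : x - latVecP d₁ d₂ j ∈ cubeP d₁ d₂ 0 := by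
      constructor
      · intro i
        simp only [latVecP, Prod.fst_sub, Pi.sub_apply, Prod.fst_zero, Pi.zero_apply,
          Int.cast_zero, hjdef]
        constructor
        · linarith [Int.floor_le (x.1 i + 1/2)]
        · linarith [Int.lt_floor_add_one (x.1 i + 1/2)]
      · intro i
        simp only [latVecP, Prod.snd_sub, Pi.sub_apply, Prod.snd_zero, Pi.zero_apply,
          Int.cast_zero, hjdef]
        constructor
        · linarith [Int.floor_le (x.2 i + 1/2)]
        · linarith [Int.lt_floor_add_one (x.2 i + 1/2)]
    have h := hψ_inf _ hmem
    rwa [← hψ_per (x - latVecP d₁ d₂ j) j, sub_add_cancel] at h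
  -- abbreviations
  set T : Set ((Fin d₁ → ℝ) × (Fin d₂ → ℝ)) := ⋃ j ∈ {j : (Fin d₁ → ℤ) × (Fin d₂ → ℤ) |
      ‖j.1‖ ≤ L / 8 ∧ R + 1 < ‖j.2‖ ∧ ‖j.2‖ ≤ 2 * R}, cubeP d₁ d₂ j with hTdef
  set Lam : Set ((Fin d₁ → ℝ) × (Fin d₂ → ℝ)) :=
    ⋃ j₁ ∈ {j₁ : Fin d₁ → ℤ | ‖j₁‖ < L}, cubeP d₁ d₂ (j₁, 0) with hLamdef
  have hTmeas : MeasurableSet T :=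
    MeasurableSet.biUnion (Set.to_countable _) fun j _ => measurableSet_cubeP d₁ d₂ j
  have hLammeas : MeasurableSet Lam :=
    MeasurableSet.biUnion (Set.to_countable _) fun j _ => measurableSet_cubeP d₁ d₂ _
  set M₁ : ℕ := ⌊L⌋₊ with hM₁def
  set M₂ : ℕ := ⌊2*R⌋₊ with hM₂def
  have hM₁L : (M₁ : ℝ) ≤ L := Nat.floor_le hL0.le
  have hM₂R : (M₂ : ℝ) ≤ 2*R := Nat.floor_le (by linarith)
  have hM₁2 : 2 ≤ M₁ := Nat.le_floor (by exact_mod_cast hL2)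
  have hLM₁ : L < (M₁ : ℝ) + 1 := Nat.lt_floor_add_one L
  set Jfin : Finset ((Fin d₁ → ℤ) × (Fin d₂ → ℤ)) :=
    (Finset.Icc (fun _ : Fin d₁ => -(M₁:ℤ)) fun _ => (M₁:ℤ)) ×ˢ
    (Finset.Icc (fun _ : Fin d₂ => -(M₂:ℤ)) fun _ => (M₂:ℤ)) with hJfindef
  have hJsub : {j : (Fin d₁ → ℤ) × (Fin d₂ → ℤ) |
      ‖j.1‖ ≤ L / 8 ∧ R + 1 < ‖j.2‖ ∧ ‖j.2‖ ≤ 2 * R} ⊆ ↑Jfin := by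
    rintro j ⟨h1, _, h3⟩
    have hj1 : ∀ i, -(M₁:ℤ) ≤ j.1 i ∧ j.1 i ≤ (M₁:ℤ) := by
      intro i
      have h := abs_le_of_norm_pi_int (h1.trans (by linarith : L/8 ≤ L)) i
      rw [abs_le] at h
      rw [hM₁def, Int.natCast_floor_eq_floor hL0.le]
      constructor
      · have h' : (-(j.1 i) : ℤ) ≤ ⌊L⌋ := Int.le_floor.2 (by push_cast; linarith [h.1])
        linarith
      · exact Int.le_floor.2 h.2
    have hj2 : ∀ i, -(M₂:ℤ) ≤ j.2 i ∧ j.2 i ≤ (M₂:ℤ) := by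
      intro i
      have h := abs_le_of_norm_pi_int h3 i
      rw [abs_le] at h
      rw [hM₂def, Int.natCast_floor_eq_floor (by linarith : (0:ℝ) ≤ 2*R)]
      constructor
      · have h' : (-(j.2 i) : ℤ) ≤ ⌊2*R⌋ := Int.le_floor.2 (by push_cast; linarith [h.1])
        linarith
      · exact Int.le_floor.2 h.2
    rw [hJfindef, Finset.mem_coe, Finset.mem_product, Finset.mem_Icc, Finset.mem_Icc]
    refine ⟨⟨fun i => (hj1 i).1, fun i => (hj1 i).2⟩, fun i => (hj2 i).1, fun i => (hj2 i).2⟩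
  have hJcard : Jfin.card = (2*M₁+1)^d₁ * (2*M₂+1)^d₂ := by
    rw [hJfindef, Finset.card_product, card_Icc_pi, card_Icc_pi]
  have hνT : ν T ≤ ENNReal.ofReal ((3*L)^d₁ * (5*R)^d₂) := by
    have h0 : ν T ≤ (Jfin.card : ℝ≥0∞) := by
      calc ν T ≤ ν (⋃ j ∈ Jfin, cubeP d₁ d₂ j) :=
            measure_mono (Set.biUnion_subset_biUnion_left hJsub)
        _ ≤ ∑ j ∈ Jfin, ν (cubeP d₁ d₂ j) := measure_biUnion_finset_le _ _
        _ ≤ ∑ _j ∈ Jfin, 1 := Finset.sum_le_sum fun j _ => hν j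
        _ = Jfin.card := by rw [Finset.sum_const, nsmul_eq_mul, mul_one]
    refine h0.trans ?_
    rw [← ENNReal.ofReal_natCast]
    apply ENNReal.ofReal_le_ofReal
    rw [hJcard]
    have h1 : ((2*(M₁:ℝ)+1)) ≤ 3*L := by linarith
    have h2 : ((2*(M₂:ℝ)+1)) ≤ 5*R := by linarith
    push_cast
    exact mul_le_mul (pow_le_pow_left₀ (by positivity) h1 d₁)
      (pow_le_pow_left₀ (by positivity) h2 d₂) (by positivity) (by positivity)
  have hvol : ENNReal.ofReal ((L/2)^d₁) ≤ volume Lam := by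
    set M₀ : ℕ := M₁ - 1 with hM₀def
    have hM₀cast : ((M₀:ℕ):ℝ) = (M₁:ℝ) - 1 := by
      rw [hM₀def, Nat.cast_sub (by omega)]; norm_num
    set Mfin : Finset (Fin d₁ → ℤ) :=
      Finset.Icc (fun _ : Fin d₁ => -((M₀ : ℕ):ℤ)) fun _ => ((M₀:ℕ):ℤ) with hMfindef
    have hMsub : (⋃ k ∈ Mfin, cubeP d₁ d₂ (k, 0)) ⊆ Lam := by
      refine Set.iUnion₂_subset fun k hk => ?_
      have hkL : ‖k‖ < L := by
        have hknorm : ‖k‖ ≤ ((M₀:ℕ):ℝ) := by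
          refine norm_pi_int_le (Nat.cast_nonneg _) fun i => ?_
          rw [hMfindef, Finset.mem_Icc] at hk
          rw [abs_le]
          constructor <;> [exact_mod_cast hk.1 i; exact_mod_cast hk.2 i]
        rw [hM₀cast] at hknorm
        linarith
      exact Set.subset_biUnion_of_mem (u := fun j₁ => cubeP d₁ d₂ (j₁, 0)) hkL
    have hdisj : Set.PairwiseDisjoint (↑Mfin) (fun k => cubeP d₁ d₂ (k, 0)) := by
      intro k _ k' _ hne
      exact cubeP_disjoint (by simp [Prod.ext_iff, hne])
    have hMeq : volume (⋃ k ∈ Mfin, cubeP d₁ d₂ (k, 0)) = (Mfin.card : ℝ≥0∞) := by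
      rw [measure_biUnion_finset hdisj fun k _ => measurableSet_cubeP d₁ d₂ _]
      simp [volume_cubeP]
    calc ENNReal.ofReal ((L/2)^d₁) ≤ (Mfin.card : ℝ≥0∞) := by
          rw [← ENNReal.ofReal_natCast]
          apply ENNReal.ofReal_le_ofReal
          rw [hMfindef, card_Icc_pi]
          have h1 : L/2 ≤ (2*((M₀:ℕ):ℝ)+1) := by rw [hM₀cast]; linarith
          have hcast2 : (((2*M₀+1)^d₁ : ℕ) : ℝ) = (2*((M₀:ℕ):ℝ)+1)^d₁ := by push_cast; ring
          rw [hcast2]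
          exact pow_le_pow_left₀ (by positivity) h1 d₁
      _ = volume (⋃ k ∈ Mfin, cubeP d₁ d₂ (k, 0)) := hMeq.symm
      _ ≤ volume Lam := measure_mono hMsub
  have hTS : T ⊆ {y : (Fin d₁ → ℝ) × (Fin d₂ → ℝ) | R < ‖y.2‖} := by
    rw [hTdef]
    refine Set.iUnion₂_subset fun j hj y hy => ?_
    obtain ⟨_, hj2, _⟩ := hj
    have h2 := norm_sub_cast_le_half hy.2
    have h3 : ‖(fun i => (j.2 i : ℝ))‖ - ‖y.2‖ ≤ ‖y.2 - fun i => (j.2 i : ℝ)‖ := by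
      rw [norm_sub_rev]; exact norm_sub_norm_le _ _
    rw [norm_intCast_pi j.2] at h3
    show R < ‖y.2‖
    linarith
  by_cases hcase : 2 * R ^ (α₂/α₁) ≤ L
  · -- genuine estimate
    set t : ℝ := R ^ (α₂/α₁) with htdef
    have ht0 : 0 < t := Real.rpow_pos_of_pos hR0 _
    have ht1 : 1 ≤ t := by
      rw [htdef]
      calc (1:ℝ) = R ^ (0:ℝ) := (Real.rpow_zero R).symm
        _ ≤ R ^ (α₂/α₁) := Real.rpow_le_rpow_of_exponent_le hR1 (by positivity)
    set m : ℕ := ⌊t⌋₊ with hmdef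
    have hm1 : (1:ℝ) ≤ (m:ℝ) := by
      have : 1 ≤ m := Nat.le_floor (by exact_mod_cast ht1)
      exact_mod_cast this
    have hmt : (m:ℝ) ≤ t := Nat.floor_le ht0.le
    have htm : t ≤ 2*(m:ℝ) := by linarith [Nat.lt_floor_add_one t]
    have htL : t ≤ L/2 := by linarith
    set K : Finset (Fin d₁ → ℤ) := Finset.Icc (fun _ => -(m:ℤ)) fun _ => (m:ℤ) with hKdef
    have hKcard : K.card = (2*m+1)^d₁ := card_Icc_pi d₁ m
    have hKnorm : ∀ k ∈ K, ‖k‖ ≤ (m:ℝ) := by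
      intro k hk
      refine norm_pi_int_le (Nat.cast_nonneg _) fun i => ?_
      rw [hKdef, Finset.mem_Icc] at hk
      rw [abs_le]
      constructor <;> [exact_mod_cast hk.1 i; exact_mod_cast hk.2 i]
    have key : ∀ j ∈ {j : (Fin d₁ → ℤ) × (Fin d₂ → ℤ) |
        ‖j.1‖ ≤ L / 8 ∧ R + 1 < ‖j.2‖ ∧ ‖j.2‖ ≤ 2 * R}, ∀ y ∈ cubeP d₁ d₂ j,
        ENNReal.ofReal (c₀ * R ^ (-(α₂ * (1 - (d₁:ℝ)/α₁)))) ≤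
          ∫⁻ x in Lam, ENNReal.ofReal (f (x - y)) := by
      rintro j ⟨hj1, hj2, hj3⟩ y hy
      have hy2a : R + 1/2 ≤ ‖y.2‖ ∧ ‖y.2‖ ≤ 2*R + 1/2 := by
        have h2 := norm_sub_cast_le_half hy.2
        have h3 : ‖(fun i => (j.2 i : ℝ))‖ - ‖y.2‖ ≤ ‖y.2 - fun i => (j.2 i : ℝ)‖ := by
          rw [norm_sub_rev]; exact norm_sub_norm_le _ _
        have h4 : ‖y.2‖ - ‖(fun i => (j.2 i : ℝ))‖ ≤ ‖y.2 - fun i => (j.2 i : ℝ)‖ :=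
          norm_sub_norm_le _ _
        rw [norm_intCast_pi j.2] at h3 h4
        exact ⟨by linarith, by linarith⟩
      have hper : ∀ k ∈ K, ENNReal.ofReal (f_u / (C₁ * R ^ α₂)) ≤
          ∫⁻ x in cubeP d₁ d₂ (j.1 + k, 0), ENNReal.ofReal (f (x - y)) := by
        intro k hk
        have hknorm := hKnorm k hk
        set v := latVecP d₁ d₂ (j.1 + k, 0) with hvdef
        have htrans : ∫⁻ x in cubeP d₁ d₂ (j.1 + k, 0), ENNReal.ofReal (f (x - y))
            = ∫⁻ z in cubeP d₁ d₂ 0, ENNReal.ofReal (f (z - (y - v))) := by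
          rw [← lintegral_cubeP_translate d₁ d₂ (j.1 + k, 0)
            (fun z => ENNReal.ofReal (f (z - (y - v))))]
          exact lintegral_congr fun x => by rw [show x - v - (y - v) = x - y by abel]
        rw [htrans]
        have hw2 : (y - v).2 = y.2 := by
          have : v.2 = 0 := by funext i; simp [hvdef, latVecP]
          rw [Prod.snd_sub, this, sub_zero]
        have hw1 : ‖(y - v).1‖ ≤ 1/2 + (m:ℝ) := by
          have hsplit : (y - v).1 = (y.1 - fun i => (j.1 i : ℝ)) - (fun i => (k i : ℝ)) := by
            funext i
            simp only [Prod.fst_sub, Pi.sub_apply, hvdef, latVecP, Pi.add_apply]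
            push_cast
            ring
          rw [hsplit]
          have hn1 := norm_sub_cast_le_half hy.1
          have hn2 : ‖(fun i => (k i : ℝ))‖ = ‖k‖ := norm_intCast_pi k
          calc ‖(y.1 - fun i => (j.1 i : ℝ)) - (fun i => (k i : ℝ))‖
              ≤ ‖y.1 - fun i => (j.1 i : ℝ)‖ + ‖(fun i => (k i : ℝ))‖ := norm_sub_le _ _
            _ ≤ 1/2 + (m:ℝ) := by rw [hn2]; linarith
        refine le_trans ?_ (h_low (y - v) ?_)
        · apply ENNReal.ofReal_le_ofReal
          rw [hw2]
          have hy2pos : 0 < ‖y.2‖ := by linarith [hy2a.1]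
          have hden_pos : 0 < ‖(y - v).1‖ ^ α₁ + ‖y.2‖ ^ α₂ := by
            have h0 : 0 < ‖y.2‖ ^ α₂ := Real.rpow_pos_of_pos hy2pos _
            have h0' : 0 ≤ ‖(y - v).1‖ ^ α₁ := Real.rpow_nonneg (norm_nonneg _) _
            linarith
          have h1 : ‖(y - v).1‖ ^ α₁ ≤ 2^α₁ * R^α₂ := by
            have ha : ‖(y - v).1‖ ≤ 2*t := by linarith
            calc ‖(y - v).1‖ ^ α₁ ≤ (2*t) ^ α₁ :=
                  Real.rpow_le_rpow (norm_nonneg _) ha hα₁.le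
              _ = 2^α₁ * t^α₁ := Real.mul_rpow (by norm_num) ht0.le
              _ = 2^α₁ * R^α₂ := by
                  rw [htdef, ← Real.rpow_mul hR0.le, div_mul_cancel₀ α₂ hα₁']
          have h2 : ‖y.2‖ ^ α₂ ≤ 3^α₂ * R^α₂ := by
            calc ‖y.2‖ ^ α₂ ≤ (3*R) ^ α₂ :=
                  Real.rpow_le_rpow (norm_nonneg _) (by linarith [hy2a.2]) hα₂.le
              _ = 3^α₂ * R^α₂ := Real.mul_rpow (by norm_num) hR0.le
          have hCR : C₁ * R^α₂ = 2^α₁*R^α₂ + 3^α₂*R^α₂ := by rw [hC₁def]; ring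
          apply div_le_div_of_nonneg_left hfu.le hden_pos
          linarith
        · refine le_max_of_le_right ?_
          rw [hw2]
          linarith [hy2a.1]
      have hUsub : (⋃ k ∈ K, cubeP d₁ d₂ (j.1 + k, 0)) ⊆ Lam := by
        refine Set.iUnion₂_subset fun k hk => ?_
        have hknorm := hKnorm k hk
        have hjk : ‖j.1 + k‖ < L := by
          calc ‖j.1 + k‖ ≤ ‖j.1‖ + ‖k‖ := norm_add_le _ _
            _ < L := by linarith
        exact Set.subset_biUnion_of_mem (u := fun j₁ => cubeP d₁ d₂ (j₁, 0)) hjk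
      have hdisjK : Set.PairwiseDisjoint (↑K) (fun k => cubeP d₁ d₂ (j.1 + k, 0)) := by
        intro k _ k' _ hne
        apply cubeP_disjoint
        intro h
        exact hne (add_left_cancel (congrArg Prod.fst h))
      calc ENNReal.ofReal (c₀ * R ^ (-(α₂ * (1 - (d₁:ℝ)/α₁))))
          ≤ (K.card : ℝ≥0∞) * ENNReal.ofReal (f_u / (C₁ * R ^ α₂)) := by
            rw [← ENNReal.ofReal_natCast, ← ENNReal.ofReal_mul (Nat.cast_nonneg _)]
            apply ENNReal.ofReal_le_ofReal
            rw [hKcard]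
            have e1 : R ^ (-(α₂ * (1 - (d₁:ℝ)/α₁))) = t ^ (d₁:ℕ) * (R ^ α₂)⁻¹ := by
              have e2 : t ^ (d₁:ℕ) = R ^ ((α₂/α₁) * (d₁:ℝ)) := by
                rw [htdef, ← Real.rpow_natCast (R ^ (α₂/α₁)) d₁, ← Real.rpow_mul hR0.le]
              have e3 : (R ^ α₂)⁻¹ = R ^ (-α₂) := (Real.rpow_neg hR0.le α₂).symm
              have hexp : -(α₂ * (1 - (d₁:ℝ)/α₁)) = (α₂/α₁) * (d₁:ℝ) + -α₂ := by
                field_simp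
                ring
              rw [e2, e3, ← Real.rpow_add hR0, hexp]
            rw [e1]
            have hpow : (t/2)^d₁ ≤ (2*(m:ℝ)+1)^d₁ :=
              pow_le_pow_left₀ (by positivity) (by linarith) d₁
            have hc₀t : c₀ * (t ^ d₁ * (R^α₂)⁻¹) = (f_u/C₁) * (t/2)^d₁ * (R^α₂)⁻¹ := by
              rw [hc₀def, div_pow]
              field_simp [hC₁.ne', (Real.rpow_pos_of_pos hR0 α₂).ne']
            have hfin : (((2*m+1)^d₁ : ℕ):ℝ) * (f_u / (C₁ * R ^ α₂))
                = (f_u/C₁) * (2*(m:ℝ)+1)^d₁ * (R^α₂)⁻¹ := by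
              push_cast
              field_simp [hC₁.ne', (Real.rpow_pos_of_pos hR0 α₂).ne']
            rw [hc₀t, hfin]
            have hRinv : (0:ℝ) ≤ (R^α₂)⁻¹ := by positivity
            apply mul_le_mul_of_nonneg_right _ hRinv
            exact mul_le_mul_of_nonneg_left hpow (by positivity)
        _ = ∑ _k ∈ K, ENNReal.ofReal (f_u / (C₁ * R ^ α₂)) := by
            rw [Finset.sum_const, nsmul_eq_mul]
        _ ≤ ∑ k ∈ K, ∫⁻ x in cubeP d₁ d₂ (j.1 + k, 0), ENNReal.ofReal (f (x - y)) :=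
            Finset.sum_le_sum hper
        _ = ∫⁻ x in ⋃ k ∈ K, cubeP d₁ d₂ (j.1 + k, 0), ENNReal.ofReal (f (x - y)) :=
            (lintegral_biUnion_finset hdisjK (fun k _ => measurableSet_cubeP d₁ d₂ _) _).symm
        _ ≤ ∫⁻ x in Lam, ENNReal.ofReal (f (x - y)) := lintegral_mono_set hUsub
    -- assemble
    haveI hfinT : IsFiniteMeasure (ν.restrict T) := by
      constructor
      rw [Measure.restrict_apply_univ]
      exact lt_of_le_of_lt hνT ENNReal.ofReal_lt_top
    have hmeasF : Measurable (fun p : ((Fin d₁ → ℝ) × (Fin d₂ → ℝ)) ×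
        ((Fin d₁ → ℝ) × (Fin d₂ → ℝ)) => ENNReal.ofReal (f (p.1 - p.2))) :=
      ENNReal.measurable_ofReal.comp (hf_meas.comp (measurable_fst.sub measurable_snd))
    have hswap : ∫⁻ x in Lam, ∫⁻ y in T, ENNReal.ofReal (f (x - y)) ∂ν ∂volume
        = ∫⁻ y in T, ∫⁻ x in Lam, ENNReal.ofReal (f (x - y)) ∂volume ∂ν :=
      lintegral_lintegral_swap hmeasF.aemeasurable
    calc ENNReal.ofReal (s * c₀ * R ^ (-(α₂ * (1 - (d₁ : ℝ) / α₁)))) * ν T -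
          ENNReal.ofReal (s * c₀ * (3 ^ d₁ * 5 ^ d₂ * 2 ^ d₁) * 2 ^ b) * volume Lam *
            ENNReal.ofReal (L ^ (-b))
        ≤ ENNReal.ofReal (s * c₀ * R ^ (-(α₂ * (1 - (d₁ : ℝ) / α₁)))) * ν T := tsub_le_self
      _ = ENNReal.ofReal (c₀ * R ^ (-(α₂ * (1 - (d₁ : ℝ) / α₁)))) * ν T * ENNReal.ofReal s := by
          rw [show s * c₀ * R ^ (-(α₂ * (1 - (d₁ : ℝ) / α₁)))
              = s * (c₀ * R ^ (-(α₂ * (1 - (d₁ : ℝ) / α₁)))) from by ring,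
            ENNReal.ofReal_mul hs.le]
          ring
      _ ≤ (∫⁻ y in T, ∫⁻ x in Lam, ENNReal.ofReal (f (x - y)) ∂volume ∂ν) *
            ENNReal.ofReal s := by
          apply mul_le_mul_left
          rw [← setLIntegral_const T (ENNReal.ofReal (c₀ * R ^ (-(α₂ * (1 - (d₁ : ℝ) / α₁)))))]
          refine lintegral_mono_ae ((ae_restrict_iff' hTmeas).2
            (Filter.Eventually.of_forall fun y hy => ?_))
          rw [hTdef] at hy
          simp only [Set.mem_iUnion] at hy
          obtain ⟨j, hjJ, hyj⟩ := hy
          exact key j hjJ y hyj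
      _ = (∫⁻ x in Lam, ∫⁻ y in T, ENNReal.ofReal (f (x - y)) ∂ν ∂volume) *
            ENNReal.ofReal s := by rw [hswap]
      _ ≤ (∫⁻ x in Lam, ∫⁻ y in {y : (Fin d₁ → ℝ) × (Fin d₂ → ℝ) | R < ‖y.2‖},
            ENNReal.ofReal (f (x - y)) ∂ν ∂volume) * ENNReal.ofReal s := by
          apply mul_le_mul_left
          exact lintegral_mono fun x => lintegral_mono' (Measure.restrict_mono hTS le_rfl) le_rfl
      _ = ∫⁻ x in Lam, (∫⁻ y in {y : (Fin d₁ → ℝ) × (Fin d₂ → ℝ) | R < ‖y.2‖},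
            ENNReal.ofReal (f (x - y)) ∂ν) * ENNReal.ofReal s ∂volume :=
          (lintegral_mul_const' _ _ ENNReal.ofReal_ne_top).symm
      _ ≤ ∫⁻ x in Lam, (∫⁻ y in {y : (Fin d₁ → ℝ) × (Fin d₂ → ℝ) | R < ‖y.2‖},
            ENNReal.ofReal (f (x - y)) ∂ν) * ENNReal.ofReal (ψ x ^ 2) ∂volume :=
          lintegral_mono fun x => mul_le_mul_right (ENNReal.ofReal_le_ofReal (hψs x)) _
  · -- error term dominates
    push_neg at hcase
    have hLb : L ^ b ≤ 2 ^ b * R ^ ((α₂/α₁) * b) := by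
      calc L ^ b ≤ (2 * R ^ (α₂/α₁)) ^ b := Real.rpow_le_rpow hL0.le hcase.le hb.le
        _ = 2 ^ b * (R ^ (α₂/α₁)) ^ b :=
            Real.mul_rpow (by norm_num) (Real.rpow_nonneg hR0.le _)
        _ = 2 ^ b * R ^ ((α₂/α₁) * b) := by rw [← Real.rpow_mul hR0.le]
    have hmain : R ^ ((d₂:ℝ)) * R ^ (-(α₂ * (1 - (d₁:ℝ)/α₁))) ≤ 2 ^ b * L ^ (-b) := by
      rw [← Real.rpow_add hR0]
      have h1 : (d₂:ℝ) + (-(α₂ * (1 - (d₁:ℝ)/α₁))) = -((α₂/α₁) * b) := by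
        rw [hbdef]; field_simp; ring
      rw [h1, Real.rpow_neg hR0.le, Real.rpow_neg hL0.le]
      have hRe : (0:ℝ) < R ^ ((α₂/α₁) * b) := Real.rpow_pos_of_pos hR0 _
      have hLbpos : (0:ℝ) < L ^ b := Real.rpow_pos_of_pos hL0 _
      have h2 : 1 / R ^ ((α₂/α₁) * b) ≤ 2^b / L^b :=
        (div_le_div_iff₀ hRe hLbpos).2 (by rw [one_mul]; linarith [hLb])
      rw [one_div, div_eq_mul_inv] at h2
      exact h2
    have hkey : ENNReal.ofReal (s * c₀ * R ^ (-(α₂ * (1 - (d₁ : ℝ) / α₁)))) * ν T ≤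
        ENNReal.ofReal (s * c₀ * (3 ^ d₁ * 5 ^ d₂ * 2 ^ d₁) * 2 ^ b) * volume Lam *
          ENNReal.ofReal (L ^ (-b)) := by
      have hP : (0:ℝ) < s * c₀ * 3^d₁ * 5^d₂ * L^d₁ :=
        mul_pos (mul_pos (mul_pos (mul_pos hs hc₀) (by positivity)) (by positivity))
          (by positivity)
      have hreal : s * c₀ * R ^ (-(α₂ * (1 - (d₁ : ℝ) / α₁))) * ((3*L)^d₁ * (5*R)^d₂)
          ≤ s * c₀ * (3 ^ d₁ * 5 ^ d₂ * 2 ^ d₁) * 2 ^ b * ((L/2)^d₁ * L ^ (-b)) := by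
        have hLex : s * c₀ * R ^ (-(α₂ * (1 - (d₁ : ℝ) / α₁))) * ((3*L)^d₁ * (5*R)^d₂)
            = (s * c₀ * 3^d₁ * 5^d₂ * L^d₁) * (R ^ ((d₂:ℝ)) * R ^ (-(α₂ * (1 - (d₁:ℝ)/α₁)))) := by
          rw [mul_pow, mul_pow, ← Real.rpow_natCast R d₂]
          ring
        have hRex : s * c₀ * (3 ^ d₁ * 5 ^ d₂ * 2 ^ d₁) * 2 ^ b * ((L/2)^d₁ * L ^ (-b))
            = (s * c₀ * 3^d₁ * 5^d₂ * L^d₁) * (2 ^ b * L ^ (-b)) := by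
          rw [div_pow]
          field_simp
        rw [hLex, hRex]
        exact mul_le_mul_of_nonneg_left hmain hP.le
      calc ENNReal.ofReal (s * c₀ * R ^ (-(α₂ * (1 - (d₁ : ℝ) / α₁)))) * ν T
          ≤ ENNReal.ofReal (s * c₀ * R ^ (-(α₂ * (1 - (d₁ : ℝ) / α₁)))) *
              ENNReal.ofReal ((3*L)^d₁ * (5*R)^d₂) := mul_le_mul_right hνT _
        _ = ENNReal.ofReal (s * c₀ * R ^ (-(α₂ * (1 - (d₁ : ℝ) / α₁))) * ((3*L)^d₁ * (5*R)^d₂)) :=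
            (ENNReal.ofReal_mul (by positivity)).symm
        _ ≤ ENNReal.ofReal (s * c₀ * (3 ^ d₁ * 5 ^ d₂ * 2 ^ d₁) * 2 ^ b * ((L/2)^d₁ * L ^ (-b))) :=
            ENNReal.ofReal_le_ofReal hreal
        _ = ENNReal.ofReal (s * c₀ * (3 ^ d₁ * 5 ^ d₂ * 2 ^ d₁) * 2 ^ b) *
              ENNReal.ofReal ((L/2)^d₁) * ENNReal.ofReal (L ^ (-b)) := by
            rw [← ENNReal.ofReal_mul (by positivity), ← ENNReal.ofReal_mul (by positivity)]
            ring_nf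
        _ ≤ ENNReal.ofReal (s * c₀ * (3 ^ d₁ * 5 ^ d₂ * 2 ^ d₁) * 2 ^ b) * volume Lam *
              ENNReal.ofReal (L ^ (-b)) := by
            exact mul_le_mul_left (mul_le_mul_right hvol _) _
    rw [tsub_eq_zero_of_le hkey]
    exact zero_le
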